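/- Let ν* = e^{-f} be a probability density on ℝ^d where f satisfies ⟨∇f(x), x⟩ ≥ a‖x‖^α - b and ‖∇f(x)‖ ≤ M(1+‖x‖^ζ) with a, b, M > 0, α ∈ [1,2], ζ ≤ α/2. Then for any probability density ρ, E_{x~ρ}[‖x‖^α] ≤ (4α/a)·(KL(ρ‖ν*) + d̃·μ̃), where μ̃ = log(16π/a) + M((2a+2b)/a)² + b + |f(0)| and d̃ = d(1+(1-α/2)log d). -/

import Mathlib

open MeasureTheory

/-- Young-type inequality for entropy: `u (v + 1) ≤ u log u + exp v` for `u ≥ 0`. -/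
lemma young_entropy (u v : ℝ) (hu : 0 ≤ u) :
    u * (v + 1) ≤ u * Real.log u + Real.exp v := by
  rcases eq_or_lt_of_le hu with h | h
  · simp [← h, Real.exp_pos v |>.le]
  · have h1 : v - Real.log u + 1 ≤ Real.exp (v - Real.log u) := by
      have := Real.add_one_le_exp (v - Real.log u); linarith
    have h2 : Real.exp (v - Real.log u) = Real.exp v / u := by
      rw [Real.exp_sub, Real.exp_log h]
    rw [h2] at h1
    have h3 : u * (v - Real.log u + 1) ≤ u * (Real.exp v / u) :=
      mul_le_mul_of_nonneg_left h1 hu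
    have h4 : u * (Real.exp v / u) = Real.exp v := by field_simp
    rw [h4] at h3
    nlinarith

/-- Radial monotonicity: dissipativity forces `f` to grow along rays. -/
lemma radial_lower_bound {d : ℕ}
    (f : EuclideanSpace ℝ (Fin d) → ℝ)
    (f' : EuclideanSpace ℝ (Fin d) → EuclideanSpace ℝ (Fin d))
    (a b α : ℝ) (ha : 0 < a) (hα1 : 1 ≤ α)
    (hgrad : ∀ x, HasGradientAt f (f' x) x)
    (hdis : ∀ x, a * ‖x‖ ^ α - b ≤ (inner ℝ (f' x) x : ℝ))
    (y : EuclideanSpace ℝ (Fin d)) (l : ℝ) (hl : 1 ≤ l) :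
    f y + a / α * ‖y‖ ^ α * (l ^ α - 1) - b * Real.log l ≤ f (l • y) := by
  have hα0 : 0 < α := lt_of_lt_of_le one_pos hα1
  set h : ℝ → ℝ := fun t => f (t • y) - a / α * ‖y‖ ^ α * t ^ α + b * Real.log t with hh
  have key : ∀ t : ℝ, 0 < t →
      HasDerivAt h ((inner ℝ (f' (t • y)) y : ℝ) - a / α * ‖y‖ ^ α * (α * t ^ (α - 1))
        + b * t⁻¹) t := by
    intro t ht
    have h1 : HasDerivAt (fun t : ℝ => f (t • y)) ((inner ℝ (f' (t • y)) y : ℝ)) t := by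
      have hsm : HasDerivAt (fun t : ℝ => t • y) ((1 : ℝ) • y) t := (hasDerivAt_id t).smul_const y
      have := ((hgrad (t • y)).hasFDerivAt).comp_hasDerivAt t (by simpa using hsm)
      simp only [InnerProductSpace.toDual_apply_apply] at this
      exact this
    have h2 : HasDerivAt (fun t : ℝ => a / α * ‖y‖ ^ α * t ^ α)
        (a / α * ‖y‖ ^ α * (α * t ^ (α - 1))) t :=
      (Real.hasDerivAt_rpow_const (Or.inl (ne_of_gt ht))).const_mul _
    have h3 : HasDerivAt (fun t : ℝ => b * Real.log t) (b * t⁻¹) t :=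
      (Real.hasDerivAt_log (ne_of_gt ht)).const_mul b
    exact (h1.sub h2).add h3
  have hder_nonneg : ∀ t : ℝ, 0 < t →
      0 ≤ (inner ℝ (f' (t • y)) y : ℝ) - a / α * ‖y‖ ^ α * (α * t ^ (α - 1)) + b * t⁻¹ := by
    intro t ht
    have hd := hdis (t • y)
    have hnorm : ‖t • y‖ ^ α = t ^ α * ‖y‖ ^ α := by
      rw [norm_smul, Real.norm_eq_abs, abs_of_pos ht, Real.mul_rpow ht.le (norm_nonneg y)]
    have hinner : (inner ℝ (f' (t • y)) (t • y) : ℝ) = t * (inner ℝ (f' (t • y)) y : ℝ) := by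
      rw [real_inner_smul_right]
    rw [hnorm, hinner] at hd
    have ht' : t ^ (α - 1) = t ^ α / t := by
      rw [Real.rpow_sub ht, Real.rpow_one]
    have hα : a / α * ‖y‖ ^ α * (α * t ^ (α - 1)) = a * ‖y‖ ^ α * (t ^ α / t) := by
      rw [ht']; field_simp
    rw [hα]
    have h5 : a * (t ^ α * ‖y‖ ^ α) - b ≤ t * (inner ℝ (f' (t • y)) y : ℝ) := hd
    have h6 : (a * (t ^ α * ‖y‖ ^ α) - b) / t ≤ (inner ℝ (f' (t • y)) y : ℝ) := by
      rw [div_le_iff₀ ht]; linarith [mul_comm (t : ℝ) ((inner ℝ (f' (t • y)) y : ℝ))]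
    have h7 : (a * (t ^ α * ‖y‖ ^ α) - b) / t
        = a * ‖y‖ ^ α * (t ^ α / t) - b * t⁻¹ := by field_simp
    rw [h7] at h6
    linarith
  rcases eq_or_lt_of_le hl with rfl | hl'
  · simp [Real.one_rpow]
  have hmono : MonotoneOn h (Set.Icc 1 l) := by
    apply monotoneOn_of_deriv_nonneg (convex_Icc 1 l)
    · intro t ht
      exact (key t (lt_of_lt_of_le one_pos ht.1)).continuousAt.continuousWithinAt
    · intro t ht
      rw [interior_Icc] at ht
      exact ((key t (lt_trans one_pos ht.1)).differentiableAt).differentiableWithinAt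
    · intro t ht
      rw [interior_Icc] at ht
      have ht0 : 0 < t := lt_trans one_pos ht.1
      rw [(key t ht0).deriv]
      exact hder_nonneg t ht0
  have h1l : h 1 ≤ h l := hmono (Set.mem_Icc.2 ⟨le_refl 1, hl⟩)
    (Set.mem_Icc.2 ⟨hl, le_refl l⟩) hl
  have e1 : h 1 = f y - a / α * ‖y‖ ^ α := by
    simp [hh, Real.one_rpow, Real.log_one]
  have e2 : h l = f (l • y) - a / α * ‖y‖ ^ α * l ^ α + b * Real.log l := rfl
  rw [e1, e2] at h1l
  nlinarith

/-- log bound: `log t ≤ (3/10) t + log (10/3) - 1` for `t > 0`. -/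
lemma log_le_linear (t : ℝ) (ht : 0 < t) :
    Real.log t ≤ 3 / 10 * t + Real.log (10 / 3) - 1 := by
  have h1 : Real.log (3 / 10 * t) ≤ 3 / 10 * t - 1 :=
    Real.log_le_sub_one_of_pos (by positivity)
  have h2 : Real.log (3 / 10 * t) = Real.log (3 / 10) + Real.log t :=
    Real.log_mul (by norm_num) (ne_of_gt ht)
  have h3 : Real.log (10 / 3) = - Real.log (3 / 10) := by
    rw [← Real.log_inv]; norm_num
  rw [h2] at h1
  rw [h3]; linarith

set_option maxHeartbeats 1000000 in
theorem moment_kl_bound {d : ℕ} (hd : 1 ≤ d)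
    (f : EuclideanSpace ℝ (Fin d) → ℝ)
    (f' : EuclideanSpace ℝ (Fin d) → EuclideanSpace ℝ (Fin d))
    (ρ : EuclideanSpace ℝ (Fin d) → ℝ)
    (a b M α ζ : ℝ) (ha : 0 < a) (hb : 0 < b) (hM : 0 < M)
    (hα1 : 1 ≤ α) (hα2 : α ≤ 2) (hζ : ζ ≤ α / 2)
    (hgrad : ∀ x, HasGradientAt f (f' x) x)
    (hdis : ∀ x, a * ‖x‖ ^ α - b ≤ (inner ℝ (f' x) x : ℝ))
    (hgrow : ∀ x, ‖f' x‖ ≤ M * (1 + ‖x‖ ^ ζ))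
    (hnorm : ∫ x, Real.exp (-f x) = 1)
    (hρ : ∀ x, 0 ≤ ρ x) (hρ1 : ∫ x, ρ x = 1)
    (hKL : Integrable (fun x => ρ x * Real.log (ρ x / Real.exp (-f x)))) :
    ∫ x, ρ x * ‖x‖ ^ α
      ≤ (4 * α / a) * ((∫ x, ρ x * Real.log (ρ x / Real.exp (-f x)))
          + (d * (1 + (1 - α / 2) * Real.log d)) *
            (Real.log (16 * Real.pi / a) + M * ((2 * a + 2 * b) / a) ^ 2 + b + |f 0|)) := by
  have hα0 : 0 < α := lt_of_lt_of_le one_pos hα1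
  set c : ℝ := a / (4 * α) with hc_def
  have hc : 0 < c := by positivity
  set γ : ℝ := (2 : ℝ) ^ (α⁻¹ : ℝ) with hγ_def
  have hγpos : 0 < γ := Real.rpow_pos_of_pos two_pos _
  have hγ1 : 1 ≤ γ := Real.one_le_rpow one_le_two (by positivity)
  have hγα : γ ^ (α : ℝ) = 2 := by
    rw [hγ_def, ← Real.rpow_mul (by norm_num : (0:ℝ) ≤ 2), inv_mul_cancel₀ (ne_of_gt hα0),
      Real.rpow_one]
  -- continuity of f
  have hfc : Continuous f := by
    rw [continuous_iff_continuousAt]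
    exact fun x => ((hgrad x).hasFDerivAt).continuousAt
  have hcnorm : Continuous fun x : EuclideanSpace ℝ (Fin d) => ‖x‖ ^ α :=
    continuous_norm.rpow_const (fun x => Or.inr hα0.le)
  -- integrability of e^{-f}
  have hintf : Integrable (fun x : EuclideanSpace ℝ (Fin d) => Real.exp (-f x)) := by
    by_contra h
    rw [integral_undef h] at hnorm
    norm_num at hnorm
  have hintρ : Integrable ρ := by
    by_contra h
    rw [integral_undef h] at hρ1
    norm_num at hρ1
  -- integrability of x ↦ exp(-f(γ⁻¹ • x))
  have hintfγ : Integrable (fun x : EuclideanSpace ℝ (Fin d) => Real.exp (-f (γ⁻¹ • x))) :=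
    hintf.comp_smul (inv_ne_zero (ne_of_gt hγpos))
  -- pointwise bound on G
  set G : EuclideanSpace ℝ (Fin d) → ℝ := fun x => Real.exp (c * ‖x‖ ^ α - f x) with hG_def
  have hGpos : ∀ x, 0 < G x := fun x => Real.exp_pos _
  have hGcont : Continuous G := (Continuous.sub (continuous_const.mul hcnorm) hfc).rexp
  have hpoint : ∀ x, G x
      ≤ γ ^ (b : ℝ) * (Real.exp (-(c * ‖x‖ ^ α)) * Real.exp (-f (γ⁻¹ • x))) := by
    intro x
    set y : EuclideanSpace ℝ (Fin d) := γ⁻¹ • x with hy_def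
    have hxy : γ • y = x := smul_inv_smul₀ (ne_of_gt hγpos) x
    have hnormy : ‖y‖ ^ α = ‖x‖ ^ α / 2 := by
      rw [hy_def, norm_smul, Real.norm_eq_abs, abs_of_pos (inv_pos.2 hγpos),
        Real.mul_rpow (by positivity) (norm_nonneg x), Real.inv_rpow hγpos.le, hγα]
      ring
    have hrad := radial_lower_bound f f' a b α ha hα1 hgrad hdis y γ hγ1
    rw [hxy, hnormy, hγα] at hrad
    -- hrad : f y + a/α * (‖x‖^α/2) * (2 - 1) - b * log γ ≤ f x
    have h2c : a / α * (‖x‖ ^ α / 2) * (2 - 1) = 2 * c * ‖x‖ ^ α := by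
      rw [hc_def]; field_simp; ring
    rw [h2c] at hrad
    have hexp : c * ‖x‖ ^ α - f x ≤ b * Real.log γ + (-(c * ‖x‖ ^ α) + -f y) := by
      linarith
    calc G x ≤ Real.exp (b * Real.log γ + (-(c * ‖x‖ ^ α) + -f y)) := Real.exp_le_exp.2 hexp
      _ = γ ^ (b : ℝ) * (Real.exp (-(c * ‖x‖ ^ α)) * Real.exp (-f y)) := by
          rw [Real.exp_add, Real.exp_add, Real.rpow_def_of_pos hγpos, mul_comm (Real.log γ) b]
  -- integrable dominating function
  have hbound : Integrable (fun x : EuclideanSpace ℝ (Fin d) =>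
      γ ^ (b : ℝ) * (Real.exp (-(c * ‖x‖ ^ α)) * Real.exp (-f (γ⁻¹ • x)))) := by
    apply Integrable.mono' (hintfγ.const_mul (γ ^ (b : ℝ)))
    · exact (continuous_const.mul (((continuous_const.mul hcnorm).neg.rexp.mul
        (hfc.comp (continuous_const_smul (γ⁻¹ : ℝ))).neg.rexp))).aestronglyMeasurable
    · filter_upwards with x
      rw [Real.norm_eq_abs, abs_of_nonneg (by positivity)]
      have h1 : Real.exp (-(c * ‖x‖ ^ α)) ≤ 1 := by
        rw [Real.exp_le_one_iff]
        have : 0 ≤ c * ‖x‖ ^ α := by positivity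
        linarith
      have h2 : (0:ℝ) < Real.exp (-f (γ⁻¹ • x)) := Real.exp_pos _
      have h3 : (0:ℝ) ≤ γ ^ (b:ℝ) := by positivity
      calc γ ^ (b:ℝ) * (Real.exp (-(c * ‖x‖ ^ α)) * Real.exp (-f (γ⁻¹ • x)))
          ≤ γ ^ (b:ℝ) * Real.exp (-f (γ⁻¹ • x)) :=
            mul_le_mul_of_nonneg_left (mul_le_of_le_one_left h2.le h1) h3
        _ = γ ^ (b:ℝ) * Real.exp (-f (γ⁻¹ • x)) := rfl
  have hGint : Integrable G := by
    apply Integrable.mono' hbound hGcont.aestronglyMeasurable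
    filter_upwards with x
    rw [Real.norm_eq_abs, abs_of_pos (hGpos x)]
    exact hpoint x
  set Z : ℝ := ∫ x, G x with hZ_def
  have hZpos : 0 < Z := by
    rw [hZ_def]
    rw [integral_pos_iff_support_of_nonneg_ae
      (Filter.Eventually.of_forall (fun x => (hGpos x).le)) hGint]
    have hsupp : Function.support G = Set.univ := by
      ext x; simp [Function.mem_support, (hGpos x).ne']
    rw [hsupp]
    exact lt_of_lt_of_le (isOpen_univ.measure_pos volume ⟨0, trivial⟩) le_rfl
  -- Z ≤ γ^b * γ^d
  have hZle : Z ≤ γ ^ (b : ℝ) * γ ^ (d : ℕ) := by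
    have step1 : Z ≤ ∫ x, γ ^ (b : ℝ) * (Real.exp (-(c * ‖x‖ ^ α)) * Real.exp (-f (γ⁻¹ • x))) :=
      integral_mono hGint hbound hpoint
    have step2 : ∫ x, γ ^ (b : ℝ) * (Real.exp (-(c * ‖x‖ ^ α)) * Real.exp (-f (γ⁻¹ • x)))
        ≤ ∫ x, γ ^ (b : ℝ) * Real.exp (-f (γ⁻¹ • x)) := by
      apply integral_mono hbound (hintfγ.const_mul _)
      intro x
      have h1 : Real.exp (-(c * ‖x‖ ^ α)) ≤ 1 := by
        rw [Real.exp_le_one_iff]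
        have : 0 ≤ c * ‖x‖ ^ α := by positivity
        linarith
      have h2 : (0:ℝ) < Real.exp (-f (γ⁻¹ • x)) := Real.exp_pos _
      have h3 : (0:ℝ) ≤ γ ^ (b:ℝ) := by positivity
      exact mul_le_mul_of_nonneg_left (mul_le_of_le_one_left h2.le h1) h3
    have step3 : ∫ x, γ ^ (b : ℝ) * Real.exp (-f (γ⁻¹ • x)) = γ ^ (b : ℝ) * γ ^ (d : ℕ) := by
      rw [integral_const_mul]
      have := MeasureTheory.Measure.integral_comp_inv_smul_of_nonneg
        (volume : Measure (EuclideanSpace ℝ (Fin d))) (fun x => Real.exp (-f x)) hγpos.le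
      rw [finrank_euclideanSpace_fin, hnorm, smul_eq_mul, mul_one] at this
      rw [this]
    linarith
  have hlogZ : Real.log Z ≤ ((d : ℝ) + b) * Real.log 2 := by
    have l1 : Real.log Z ≤ Real.log (γ ^ (b : ℝ) * γ ^ (d : ℕ)) :=
      Real.log_le_log hZpos hZle
    have l2 : Real.log (γ ^ (b : ℝ) * γ ^ (d : ℕ)) = b * Real.log γ + d * Real.log γ := by
      rw [Real.log_mul (by positivity) (by positivity), Real.log_rpow hγpos, Real.log_pow]
    have l3 : Real.log γ = α⁻¹ * Real.log 2 := Real.log_rpow two_pos _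
    have hlog2 : (0:ℝ) < Real.log 2 := Real.log_pos one_lt_two
    have hαinv : α⁻¹ ≤ 1 := by
      rw [inv_le_one_iff₀]; right; exact hα1
    have l4 : b * Real.log γ + d * Real.log γ = ((d:ℝ) + b) * (α⁻¹ * Real.log 2) := by
      rw [l3]; ring
    have l5 : ((d:ℝ) + b) * (α⁻¹ * Real.log 2) ≤ ((d:ℝ) + b) * Real.log 2 := by
      apply mul_le_mul_of_nonneg_left _ (by positivity)
      nlinarith
    rw [l2, l4] at l1
    linarith
  -- main entropy inequality
  set KL : ℝ := ∫ x, ρ x * Real.log (ρ x / Real.exp (-f x)) with hKL_def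
  have hstar : ∀ x, ρ x * (c * ‖x‖ ^ α) + ρ x
      ≤ ρ x * Real.log (ρ x / Real.exp (-f x)) + ρ x * Real.log Z + G x / Z := by
    intro x
    have hy := young_entropy (ρ x) (c * ‖x‖ ^ α - f x - Real.log Z) (hρ x)
    have hev : Real.exp (c * ‖x‖ ^ α - f x - Real.log Z) = G x / Z := by
      rw [Real.exp_sub, Real.exp_log hZpos]
    rw [hev] at hy
    have hlog : ρ x * Real.log (ρ x / Real.exp (-f x))
        = ρ x * Real.log (ρ x) + ρ x * f x := by
      rcases eq_or_lt_of_le (hρ x) with h | h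
      · simp [← h]
      · rw [Real.log_div (ne_of_gt h) (Real.exp_ne_zero _), Real.log_exp]
        ring
    rw [hlog]
    nlinarith [hy]
  -- integrability of RHS
  have hRHSint : Integrable (fun x => ρ x * Real.log (ρ x / Real.exp (-f x))
      + ρ x * Real.log Z + G x / Z) :=
    (hKL.add (hintρ.mul_const _)).add (hGint.div_const _)
  have hLHSint : Integrable (fun x => ρ x * (c * ‖x‖ ^ α) + ρ x) := by
    apply Integrable.mono' hRHSint
    · exact ((hintρ.aestronglyMeasurable.mul
        ((continuous_const.mul hcnorm).aestronglyMeasurable)).add hintρ.aestronglyMeasurable)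
    · filter_upwards with x
      rw [Real.norm_eq_abs, abs_of_nonneg
        (add_nonneg (mul_nonneg (hρ x) (by positivity)) (hρ x))]
      exact hstar x
  have hmono := integral_mono hLHSint hRHSint hstar
  -- compute both sides
  have hint1 : Integrable (fun x => ρ x * (c * ‖x‖ ^ α)) := by
    have h := hLHSint.sub hintρ
    have he : ((fun x => ρ x * (c * ‖x‖ ^ α) + ρ x) - ρ)
        = fun x => ρ x * (c * ‖x‖ ^ α) := by
      ext x; simp [Pi.sub_apply]
    rwa [he] at h
  have hLHSval : ∫ x, (ρ x * (c * ‖x‖ ^ α) + ρ x) = c * (∫ x, ρ x * ‖x‖ ^ α) + 1 := by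
    rw [integral_add hint1 hintρ, hρ1]
    congr 1
    have he : (fun x => ρ x * (c * ‖x‖ ^ α)) = fun x => c * (ρ x * ‖x‖ ^ α) := by
      ext x; ring
    rw [he, integral_const_mul]
  have hRHSval : ∫ x, (ρ x * Real.log (ρ x / Real.exp (-f x))
      + ρ x * Real.log Z + G x / Z) = KL + Real.log Z + 1 := by
    have hAB : Integrable (fun x => ρ x * Real.log (ρ x / Real.exp (-f x))
        + ρ x * Real.log Z) := hKL.add (hintρ.mul_const (Real.log Z))
    have hC : Integrable (fun x => G x / Z) := hGint.div_const Z
    have hB : Integrable (fun x => ρ x * Real.log Z) := hintρ.mul_const (Real.log Z)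
    rw [integral_add hAB hC, integral_add hKL hB, integral_mul_const, hρ1,
      integral_div, ← hZ_def, div_self (ne_of_gt hZpos), ← hKL_def]
    ring
  rw [hLHSval, hRHSval] at hmono
  -- hence c * moment ≤ KL + log Z
  have hmain : c * (∫ x, ρ x * ‖x‖ ^ α) ≤ KL + Real.log Z := by linarith
  -- numeric facts
  have hunit : a ≤ 2 * M + b := by
    set u : EuclideanSpace ℝ (Fin d) := EuclideanSpace.single (⟨0, by omega⟩ : Fin d) (1:ℝ)
      with hu_def
    have hnu : ‖u‖ = 1 := by
      rw [hu_def, EuclideanSpace.norm_single]; norm_num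
    have h1 := hdis u
    have h2 := hgrow u
    rw [hnu, Real.one_rpow] at h1 h2
    have h3 : (inner ℝ (f' u) u : ℝ) ≤ ‖f' u‖ := by
      have := real_inner_le_norm (f' u) u
      rw [hnu, mul_one] at this
      exact this
    nlinarith
  have hlog2lt : Real.log 2 < 0.6931471808 := Real.log_two_lt_d9
  have hlog2pos : (0:ℝ) < Real.log 2 := Real.log_pos one_lt_two
  -- (1+b) log 2 ≤ μ̃
  set μ : ℝ := Real.log (16 * Real.pi / a) + M * ((2 * a + 2 * b) / a) ^ 2 + b + |f 0|
    with hμ_def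
  have hμbound : (1 + b) * Real.log 2 ≤ μ := by
    have hQ : (2:ℝ) ≤ (2 * a + 2 * b) / a := by
      rw [le_div_iff₀ ha]; nlinarith
    have hQ2 : (4:ℝ) ≤ ((2 * a + 2 * b) / a) ^ 2 := by nlinarith
    have hMQ : 4 * M ≤ M * ((2 * a + 2 * b) / a) ^ 2 := by nlinarith
    have hlogdiv : Real.log (16 * Real.pi / a) = Real.log (16 * Real.pi) - Real.log a :=
      Real.log_div (by positivity) (ne_of_gt ha)
    have hloga : Real.log a ≤ Real.log (2 * M + b) :=
      Real.log_le_log ha hunit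
    have hlin : Real.log (2 * M + b) ≤ 3 / 10 * (2 * M + b) + Real.log (10 / 3) - 1 :=
      log_le_linear _ (by positivity)
    have hpi : (3:ℝ) < Real.pi := Real.pi_gt_three
    have hlogcmp : Real.log (10 / 3) ≤ Real.log (16 * Real.pi) := by
      apply Real.log_le_log (by norm_num)
      nlinarith
    have habs : (0:ℝ) ≤ |f 0| := abs_nonneg _
    rw [hμ_def, hlogdiv]
    nlinarith
  -- D̃ ≥ d and μ ≥ 0
  set D : ℝ := (d : ℝ) * (1 + (1 - α / 2) * Real.log d) with hD_def
  have hd1 : (1:ℝ) ≤ (d:ℝ) := by exact_mod_cast hd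
  have hlogd : (0:ℝ) ≤ Real.log d := Real.log_nonneg hd1
  have hDd : (d:ℝ) ≤ D := by
    rw [hD_def]
    have h1 : (1:ℝ) ≤ 1 + (1 - α / 2) * Real.log d := by nlinarith
    nlinarith
  have hμpos : 0 ≤ μ := le_trans (by positivity) hμbound
  have hfinal : Real.log Z ≤ D * μ := by
    have h1 : ((d:ℝ) + b) * Real.log 2 ≤ (d:ℝ) * ((1 + b) * Real.log 2) := by
      nlinarith [mul_nonneg (mul_nonneg (sub_nonneg.2 hd1) hb.le) hlog2pos.le]
    have h2 : (d:ℝ) * ((1 + b) * Real.log 2) ≤ (d:ℝ) * μ :=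
      mul_le_mul_of_nonneg_left hμbound (by positivity)
    have h3 : (d:ℝ) * μ ≤ D * μ := mul_le_mul_of_nonneg_right hDd hμpos
    linarith
  -- conclude
  have hcS : c * (∫ x, ρ x * ‖x‖ ^ α) ≤ KL + D * μ := by linarith
  have hfrac : (4 * α / a) = 1 / c := by
    rw [hc_def]; field_simp
  have hstep : (∫ x, ρ x * ‖x‖ ^ α) ≤ (KL + D * μ) / c := by
    rw [le_div_iff₀ hc]
    calc (∫ x, ρ x * ‖x‖ ^ α) * c = c * (∫ x, ρ x * ‖x‖ ^ α) := mul_comm _ _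
      _ ≤ KL + D * μ := hcS
  calc (∫ x, ρ x * ‖x‖ ^ α) ≤ (KL + D * μ) / c := hstep
    _ = (4 * α / a) * (KL + D * μ) := by
        rw [hc_def]
        field_simp
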